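/- Let K = (K, ≤_K) be an abstract elementary class. Then K is closed under unions of ≤_K-directed subsets: if D ⊆ K is ≤_K-directed (any two elements of D have a common ≤_K-upper bound in D), then ⋃D ∈ K, and ⋃D is the ≤_K-least upper bound of D. -/

import Mathlib

open FirstOrder Cardinal

universe u v w

/-- A τ-structure with universe a subset of a fixed ambient type `α`. -/
structure ConcStructure (L : FirstOrder.Language.{u, v}) (α : Type w) where
  carrier : Set α
  str : L.Structure carrier

namespace ConcStructure

variable {L : FirstOrder.Language.{u, v}} {α : Type w}

/-- `M` is a substructure of `N`: the inclusion of carriers is an `L`-embedding. -/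
def Sub (M N : ConcStructure L α) : Prop :=
  ∃ e : @FirstOrder.Language.Embedding L M.carrier N.carrier M.str N.str,
    ∀ x : M.carrier, (↑(e x) : α) = (x : α)

/-- `f : α → α` restricts to an `L`-isomorphism from `M` onto `N`. -/
def IsIsoBy (M N : ConcStructure L α) (f : α → α) : Prop :=
  ∃ e : @FirstOrder.Language.Equiv L M.carrier N.carrier M.str N.str,
    ∀ x : M.carrier, (↑(e x) : α) = f (x : α)

/-- `M` and `N` are isomorphic `L`-structures. -/
def Iso (M N : ConcStructure L α) : Prop :=
  ∃ f : α → α, M.IsIsoBy N f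

end ConcStructure

/-- `U` is the union of the family `s` of structures: its carrier is the union of the
carriers and every member of `s` is a substructure of `U`. -/
def IsUnionOf {L : FirstOrder.Language.{u, v}} {α : Type w}
    (U : ConcStructure L α) (s : Set (ConcStructure L α)) : Prop :=
  U.carrier = (⋃ M ∈ s, M.carrier) ∧ ∀ M ∈ s, M.Sub U

/-- An abstract elementary class of τ-structures with universes subsets of `α`:
a class `K` together with a binary relation `≤_K` satisfying Axioms 0–VI. -/
structure AEC (L : FirstOrder.Language.{u, v}) (α : Type w) where
  K : Set (ConcStructure L α)
  le : ConcStructure L α → ConcStructure L α → Prop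
  le_mem : ∀ {M N}, le M N → M ∈ K ∧ N ∈ K
  /-- Ax 0: `K` is closed under isomorphism. -/
  ax0_K : ∀ {M N}, M ∈ K → ConcStructure.Iso M N → N ∈ K
  /-- Ax 0: `≤_K` is preserved under isomorphisms. -/
  ax0_le : ∀ {M N M' N' : ConcStructure L α} {f : α → α},
    le M N → ConcStructure.IsIsoBy N N' f → ConcStructure.IsIsoBy M M' f → le M' N'
  /-- Ax I: `M ≤_K N` implies that `M` is a substructure of `N`. -/
  axI : ∀ {M N}, le M N → M.Sub N
  /-- Ax II: `≤_K` is a partial order on `K`. -/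
  axII_refl : ∀ {M}, M ∈ K → le M M
  axII_antisymm : ∀ {M N}, le M N → le N M → M = N
  axII_trans : ∀ {M N O}, le M N → le N O → le M O
  /-- Ax III, IV: the union of a `≤_K`-increasing continuous chain of elements of `K`
  is an element of `K` and the `≤_K`-least upper bound of the chain. -/
  axIII_IV : ∀ (δ : Ordinal.{w}) (M : Ordinal.{w} → ConcStructure L α),
    δ ≠ 0 →
    (∀ i j, i ≤ j → j < δ → le (M i) (M j)) →
    (∀ i, i < δ → Order.IsSuccLimit i → IsUnionOf (M i) {N | ∃ j < i, N = M j}) →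
    ∃ U, IsUnionOf U {N | ∃ j < δ, N = M j} ∧ U ∈ K ∧
      (∀ i, i < δ → le (M i) U) ∧
      ∀ W, (∀ i, i < δ → le (M i) W) → le U W
  /-- Ax V -/
  axV : ∀ {M₀ M₁ N}, le M₀ N → le M₁ N → M₀.Sub M₁ → le M₀ M₁
  /-- Ax VI: existence of a Löwenheim–Skolem number. -/
  axVI : ∃ κ : Cardinal.{w}, ∀ M ∈ K, ∀ A ⊆ M.carrier,
    ∃ N, N ∈ K ∧ le N M ∧ A ⊆ N.carrier ∧ #(↥N.carrier) ≤ κ * (#(↥A) + 1)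

namespace AECUnionAux

open ConcStructure Set FirstOrder Language

variable {L : FirstOrder.Language.{u, v}} {α : Type w}

lemma sub_carrier {M N : ConcStructure L α} (h : M.Sub N) : M.carrier ⊆ N.carrier := by
  obtain ⟨e, he⟩ := h
  intro a ha
  have h2 := (e ⟨a, ha⟩).2
  rwa [he ⟨a, ha⟩] at h2

lemma eq_of_sub_sub {M N W : ConcStructure L α} (hM : M.Sub W) (hN : N.Sub W)
    (h : M.carrier = N.carrier) : M = N := by
  obtain ⟨cM, sM⟩ := M
  obtain ⟨cN, sN⟩ := N
  obtain rfl : cM = cN := h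
  obtain ⟨eM, heM⟩ := hM
  obtain ⟨eN, heN⟩ := hN
  have hfun : ∀ x : ↥cM, eM x = eN x := fun x => Subtype.ext (by rw [heM x, heN x])
  congr 1
  apply FirstOrder.Language.Structure.ext
  · funext n f x
    apply Subtype.ext
    have h1 := congrArg Subtype.val (@Embedding.map_fun L ↥cM ↥W.carrier sM W.str eM n f x)
    have h2 := congrArg Subtype.val (@Embedding.map_fun L ↥cM ↥W.carrier sN W.str eN n f x)
    rw [heM] at h1
    rw [heN] at h2
    rw [h1, h2, show (⇑eM ∘ x) = (⇑eN ∘ x) from funext fun i => hfun (x i)]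
  · funext n r x
    have h1 := @Embedding.map_rel L ↥cM ↥W.carrier sM W.str eM n r x
    have h2 := @Embedding.map_rel L ↥cM ↥W.carrier sN W.str eN n r x
    rw [show (⇑eM ∘ x) = (⇑eN ∘ x) from funext fun i => hfun (x i)] at h1
    exact propext (h1.symm.trans h2)

end AECUnionAux
namespace AECUnionAux

variable {β : Type*} (u : β → β → β)

/-- One step of closing a set under the binary operation `u`. -/
def gstep (S : Set β) : Set β := S ∪ Set.image2 u S S

/-- The closure of a set under the binary operation `u`. -/
def cl (S : Set β) : Set β := ⋃ n : ℕ, (gstep u)^[n] S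

variable {u}

lemma subset_gstep (S : Set β) : S ⊆ gstep u S := Set.subset_union_left

lemma gstep_mono {S T : Set β} (h : S ⊆ T) : gstep u S ⊆ gstep u T :=
  Set.union_subset_union h (Set.image2_subset h h)

lemma iterate_mono {S T : Set β} (h : S ⊆ T) (n : ℕ) :
    (gstep u)^[n] S ⊆ (gstep u)^[n] T := by
  induction n with
  | zero => exact h
  | succ n ih => rw [Function.iterate_succ_apply', Function.iterate_succ_apply']
                 exact gstep_mono ih

lemma iterate_le_iterate {S : Set β} {m n : ℕ} (h : m ≤ n) :
    (gstep u)^[m] S ⊆ (gstep u)^[n] S := by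
  induction n with
  | zero => simpa [Nat.le_zero.mp h]
  | succ n ih =>
    rcases Nat.le_succ_iff.mp h with h' | h'
    · rw [Function.iterate_succ_apply']
      exact (ih h').trans (subset_gstep _)
    · exact h' ▸ subset_rfl

lemma subset_cl (S : Set β) : S ⊆ cl u S :=
  Set.subset_iUnion (fun n : ℕ => (gstep u)^[n] S) 0

lemma cl_mono {S T : Set β} (h : S ⊆ T) : cl u S ⊆ cl u T :=
  Set.iUnion_mono fun n => iterate_mono h n

lemma cl_closed {S : Set β} {x y : β} (hx : x ∈ cl u S) (hy : y ∈ cl u S) :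
    u x y ∈ cl u S := by
  obtain ⟨m, hm⟩ := Set.mem_iUnion.mp hx
  obtain ⟨n, hn⟩ := Set.mem_iUnion.mp hy
  refine Set.mem_iUnion.mpr ⟨max m n + 1, ?_⟩
  rw [Function.iterate_succ_apply']
  exact Set.subset_union_right
    (Set.mem_image2_of_mem (iterate_le_iterate (le_max_left m n) hm)
      (iterate_le_iterate (le_max_right m n) hn))

lemma cl_subset_of_closed {S T : Set β} (hST : S ⊆ T)
    (hT : ∀ x ∈ T, ∀ y ∈ T, u x y ∈ T) : cl u S ⊆ T := by
  refine Set.iUnion_subset fun n => ?_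
  induction n with
  | zero => exact hST
  | succ n ih =>
    rw [Function.iterate_succ_apply']
    exact Set.union_subset ih fun z hz => by
      obtain ⟨x, hx, y, hy, rfl⟩ := hz
      exact hT x (ih hx) y (ih hy)

lemma iterate_subset_of_closed {S T : Set β} (hST : S ⊆ T)
    (hT : ∀ x ∈ T, ∀ y ∈ T, u x y ∈ T) (n : ℕ) : (gstep u)^[n] S ⊆ T :=
  (Set.subset_iUnion (fun n : ℕ => (gstep u)^[n] S) n).trans (cl_subset_of_closed hST hT)

end AECUnionAux
namespace AECUnionAux

open ConcStructure Set

variable {L : FirstOrder.Language.{u, v}} {α : Type w}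

/-- The "small" cardinality of a family of concrete structures: the cardinality of the
set of its carriers, which lives in universe `w`. -/
noncomputable def nu (S : Set (ConcStructure L α)) : Cardinal.{w} :=
  #(ConcStructure.carrier '' S)

lemma nu_mono {S T : Set (ConcStructure L α)} (h : S ⊆ T) : nu S ≤ nu T :=
  Cardinal.mk_le_mk_of_subset (Set.image_mono h)

lemma nu_insert_le (M : ConcStructure L α) (S : Set (ConcStructure L α)) :
    nu (insert M S) ≤ nu S + 1 := by
  unfold nu
  rw [Set.image_insert_eq]
  exact Cardinal.mk_insert_le

lemma nu_union_le (S T : Set (ConcStructure L α)) : nu (S ∪ T) ≤ nu S + nu T := by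
  unfold nu
  rw [Set.image_union]
  exact Cardinal.mk_union_le _ _

lemma nu_image_le {ι : Type w} (f : ι → ConcStructure L α) (B : Set ι) :
    nu (f '' B) ≤ #B := by
  unfold nu
  rw [← Set.image_comp]
  exact Cardinal.mk_image_le

lemma nu_image2_le {D S : Set (ConcStructure L α)} {uf : ConcStructure L α → ConcStructure L α → ConcStructure L α}
    (hS : S ⊆ D) (hinj : Set.InjOn ConcStructure.carrier D)
    (hu : ∀ x ∈ D, ∀ y ∈ D, uf x y ∈ D) :
    nu (Set.image2 uf S S) ≤ nu S * nu S := by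
  classical
  by_cases hSe : S = ∅
  · simp [hSe, nu]
  obtain ⟨M₀, hM₀⟩ := Set.nonempty_iff_ne_empty.mpr hSe
  have pick : ∀ y : ↥(ConcStructure.carrier '' S), ∃ x, x ∈ S ∧ ConcStructure.carrier x = ↑y :=
    fun y => Set.mem_image _ _ _ |>.mp y.2
  choose p hpS hpc using pick
  have hf : ∀ q : ↥(ConcStructure.carrier '' S) × ↥(ConcStructure.carrier '' S),
      ConcStructure.carrier (uf (p q.1) (p q.2)) ∈ ConcStructure.carrier '' Set.image2 uf S S :=
    fun q => Set.mem_image_of_mem _ (Set.mem_image2_of_mem (hpS q.1) (hpS q.2))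
  have hsurj : Function.Surjective
      (fun q : ↥(ConcStructure.carrier '' S) × ↥(ConcStructure.carrier '' S) =>
        (⟨ConcStructure.carrier (uf (p q.1) (p q.2)), hf q⟩ :
          ↥(ConcStructure.carrier '' Set.image2 uf S S))) := by
    rintro ⟨z, hz⟩
    obtain ⟨m, hm, rfl⟩ := hz
    obtain ⟨x, hx, y, hy, rfl⟩ := hm
    set a : ↥(ConcStructure.carrier '' S) := ⟨_, Set.mem_image_of_mem _ hx⟩
    set b : ↥(ConcStructure.carrier '' S) := ⟨_, Set.mem_image_of_mem _ hy⟩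
    have hax : p a = x := hinj (hS (hpS a)) (hS hx) (hpc a)
    have hby : p b = y := hinj (hS (hpS b)) (hS hy) (hpc b)
    refine ⟨(a, b), ?_⟩
    apply Subtype.ext
    dsimp only
    rw [hax, hby]
  have := Cardinal.mk_le_of_surjective hsurj
  refine this.trans (le_of_eq ?_)
  rw [Cardinal.mk_prod]
  simp [nu]

lemma nu_cl_le {D S : Set (ConcStructure L α)}
    {uf : ConcStructure L α → ConcStructure L α → ConcStructure L α}
    (hS : S ⊆ D) (hinj : Set.InjOn ConcStructure.carrier D)
    (hu : ∀ x ∈ D, ∀ y ∈ D, uf x y ∈ D) :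
    nu (cl uf S) ≤ nu S + Cardinal.aleph0.{w} := by
  set κ : Cardinal.{w} := nu S + Cardinal.aleph0.{w} with hκ
  have hκ0 : Cardinal.aleph0.{w} ≤ κ := le_add_self
  have hDclosed : ∀ x ∈ D, ∀ y ∈ D, uf x y ∈ D := hu
  have hiter : ∀ n : ℕ, nu ((gstep uf)^[n] S) ≤ κ := by
    intro n
    induction n with
    | zero => exact le_add_right le_rfl
    | succ n ih =>
      rw [Function.iterate_succ_apply']
      have hsub : (gstep uf)^[n] S ⊆ D := iterate_subset_of_closed hS hDclosed n
      refine (nu_union_le _ _).trans ?_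
      have h2 := nu_image2_le hsub hinj hu
      have h3 : nu ((gstep uf)^[n] S) * nu ((gstep uf)^[n] S) ≤ κ := by
        calc nu ((gstep uf)^[n] S) * nu ((gstep uf)^[n] S) ≤ κ * κ :=
              mul_le_mul' ih ih
          _ = κ := Cardinal.mul_eq_self hκ0
      have := add_le_add ih (h2.trans h3)
      exact this.trans (le_of_eq (Cardinal.add_eq_self hκ0))
  have hexp : cl uf S = ⋃ i : ULift.{w} ℕ, (gstep uf)^[i.down] S := by
    ext x
    simp only [cl, Set.mem_iUnion]
    exact ⟨fun ⟨n, hn⟩ => ⟨⟨n⟩, hn⟩, fun ⟨i, hi⟩ => ⟨i.down, hi⟩⟩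
  rw [nu, hexp, Set.image_iUnion]
  refine (Cardinal.mk_iUnion_le _).trans ?_
  have h1 : #(ULift.{w} ℕ) = Cardinal.aleph0.{w} := by simp
  have h2 : ⨆ i : ULift.{w} ℕ, #(ConcStructure.carrier '' (gstep uf)^[i.down] S) ≤ κ :=
    ciSup_le' fun i => hiter i.down
  calc #(ULift.{w} ℕ) * ⨆ i : ULift.{w} ℕ, #(ConcStructure.carrier '' (gstep uf)^[i.down] S)
      ≤ Cardinal.aleph0.{w} * κ := by rw [h1]; exact mul_le_mul' le_rfl h2
    _ ≤ κ * κ := mul_le_mul' hκ0 le_rfl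
    _ = κ := Cardinal.mul_eq_self hκ0

end AECUnionAux
/-- An abstract elementary class is closed under unions of `≤_K`-directed subsets:
the union of a (nonempty) `≤_K`-directed subset `D ⊆ K` is an element of `K` and is
the `≤_K`-least upper bound of `D`. -/
theorem AEC.union_of_directed {L : FirstOrder.Language.{u, v}} {α : Type w}
    (C : AEC L α) (D : Set (ConcStructure L α)) (hDK : D ⊆ C.K)
    (hne : D.Nonempty)
    (hdir : ∀ M ∈ D, ∀ N ∈ D, ∃ W ∈ D, C.le M W ∧ C.le N W) :
    ∃ U, IsUnionOf U D ∧ U ∈ C.K ∧ (∀ M ∈ D, C.le M U) ∧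
      ∀ W, (∀ M ∈ D, C.le M W) → C.le U W := by
  classical
  have main : ∀ c : Cardinal.{w}, ∀ D' : Set (ConcStructure L α),
      D' ⊆ C.K → D'.Nonempty →
      (∀ M ∈ D', ∀ N ∈ D', ∃ W ∈ D', C.le M W ∧ C.le N W) →
      AECUnionAux.nu D' ≤ c →
      ∃ U, IsUnionOf U D' ∧ U ∈ C.K ∧ (∀ M ∈ D', C.le M U) ∧
        ∀ W, (∀ M ∈ D', C.le M W) → C.le U W := by
    intro c
    induction c using WellFoundedLT.induction with
    | _ c IH =>
    intro D' hD'K hD'ne hD'dir hc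
    have hinj : Set.InjOn ConcStructure.carrier D' := fun M hM N hN h => by
      obtain ⟨W, _, hMW, hNW⟩ := hD'dir M hM N hN
      exact AECUnionAux.eq_of_sub_sub (C.axI hMW) (C.axI hNW) h
    have hub : ∀ M N : ConcStructure L α,
        ∃ W, M ∈ D' → N ∈ D' → (W ∈ D' ∧ C.le M W ∧ C.le N W) := by
      intro M N
      by_cases hM : M ∈ D'
      · by_cases hN : N ∈ D'
        · obtain ⟨W, h1, h2, h3⟩ := hD'dir M hM N hN
          exact ⟨W, fun _ _ => ⟨h1, h2, h3⟩⟩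
        · exact ⟨M, fun _ hN' => absurd hN' hN⟩
      · exact ⟨M, fun hM' => absurd hM' hM⟩
    choose uf huf using hub
    have hufD : ∀ x ∈ D', ∀ y ∈ D', uf x y ∈ D' := fun x hx y hy => (huf x y hx hy).1
    have hcar : ∀ {M N : ConcStructure L α}, C.le M N → M.carrier ⊆ N.carrier :=
      fun h => AECUnionAux.sub_carrier (C.axI h)
    rcases le_or_gt (AECUnionAux.nu D') Cardinal.aleph0.{w} with hsmall | hbig
    · -- countable case
      have hcnt : D'.Countable := by
        have h1 : Countable ↥(ConcStructure.carrier '' D') := Cardinal.mk_le_aleph0_iff.mp hsmall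
        have e := Set.BijOn.equiv ConcStructure.carrier (Set.InjOn.bijOn_image hinj)
        exact Set.countable_coe_iff.mp (Countable.of_equiv _ e.symm)
      obtain ⟨d, hd⟩ := hcnt.exists_eq_range hD'ne
      have hdmem : ∀ n, d n ∈ D' := fun n => hd ▸ Set.mem_range_self n
      let Wc : ℕ → ConcStructure L α := fun n => Nat.rec (d 0) (fun m Wm => uf Wm (d (m + 1))) n
      have hWcs : ∀ n, Wc (n + 1) = uf (Wc n) (d (n + 1)) := fun n => rfl
      have hWmem : ∀ n, Wc n ∈ D' := by
        intro n
        induction n with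
        | zero => exact hdmem 0
        | succ n ih => rw [hWcs]; exact hufD _ ih _ (hdmem (n + 1))
      have hdle : ∀ n, C.le (d n) (Wc n) := by
        intro n
        cases n with
        | zero => exact C.axII_refl (hD'K (hdmem 0))
        | succ n => exact (huf (Wc n) (d (n + 1)) (hWmem n) (hdmem (n + 1))).2.2
      have hWstep : ∀ n, C.le (Wc n) (Wc (n + 1)) := fun n =>
        (huf (Wc n) (d (n + 1)) (hWmem n) (hdmem (n + 1))).2.1
      have hWmono : ∀ m n, m ≤ n → C.le (Wc m) (Wc n) := by
        intro m n h
        induction n with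
        | zero => rw [Nat.le_zero.mp h]; exact C.axII_refl (hD'K (hWmem 0))
        | succ n ih =>
          rcases h.lt_or_eq with h' | h'
          · exact C.axII_trans (ih (Nat.lt_succ_iff.mp h')) (hWstep n)
          · rw [h']; exact C.axII_refl (hD'K (hWmem (n + 1)))
      let Mo : Ordinal.{w} → ConcStructure L α := fun i =>
        if h : i < Ordinal.omega0.{w} then Wc (Ordinal.lt_omega0.mp h).choose else Wc 0
      have hMo : ∀ n : ℕ, Mo (n : Ordinal.{w}) = Wc n := by
        intro n
        have h : (n : Ordinal.{w}) < Ordinal.omega0 := Ordinal.nat_lt_omega0 n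
        have hs := (Ordinal.lt_omega0.mp h).choose_spec
        simp only [Mo, dif_pos h]
        exact (congrArg Wc (Nat.cast_inj.mp hs)).symm
      have hinc : ∀ i j, i ≤ j → j < Ordinal.omega0.{w} → C.le (Mo i) (Mo j) := by
        intro i j hij hj
        obtain ⟨n, rfl⟩ := Ordinal.lt_omega0.mp hj
        obtain ⟨m, rfl⟩ := Ordinal.lt_omega0.mp (lt_of_le_of_lt hij (Ordinal.nat_lt_omega0 n))
        rw [hMo, hMo]
        exact hWmono m n (by exact_mod_cast hij)
      have hcont : ∀ i, i < Ordinal.omega0.{w} → Order.IsSuccLimit i →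
          IsUnionOf (Mo i) {N | ∃ j < i, N = Mo j} := by
        intro i hi hlim
        exact absurd (Ordinal.omega0_le_of_isSuccLimit hlim) (not_le.mpr hi)
      obtain ⟨U, hU, hUK, hUle, hUlub⟩ :=
        C.axIII_IV Ordinal.omega0 Mo Ordinal.omega0_ne_zero hinc hcont
      have hWcle : ∀ n, C.le (Wc n) U := fun n => hMo n ▸ hUle _ (Ordinal.nat_lt_omega0 n)
      have hDle : ∀ M ∈ D', C.le M U := by
        intro M hM
        rw [hd] at hM
        obtain ⟨n, rfl⟩ := hM
        exact C.axII_trans (hdle n) (hWcle n)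
      refine ⟨U, ⟨?_, fun M hM => C.axI (hDle M hM)⟩, hUK, hDle, ?_⟩
      · rw [hU.1]
        apply subset_antisymm
        · refine Set.iUnion₂_subset fun N hN => ?_
          obtain ⟨j, hj, rfl⟩ := hN
          obtain ⟨n, rfl⟩ := Ordinal.lt_omega0.mp hj
          rw [hMo]
          exact Set.subset_biUnion_of_mem (hWmem n)
        · refine Set.iUnion₂_subset fun M hM => ?_
          have hM' := hM
          rw [hd] at hM'
          obtain ⟨n, rfl⟩ := hM'
          refine (hcar (hdle n)).trans ?_
          exact Set.subset_biUnion_of_mem (⟨n, Ordinal.nat_lt_omega0 n, (hMo n).symm⟩ :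
            Wc n ∈ {N | ∃ j < Ordinal.omega0.{w}, N = Mo j})
      · intro W hW
        refine hUlub W fun i hi => ?_
        obtain ⟨n, rfl⟩ := Ordinal.lt_omega0.mp hi
        rw [hMo]
        exact hW _ (hWmem n)
    · -- uncountable case
      have hlimo : Order.IsSuccLimit (AECUnionAux.nu D').ord := Cardinal.isSuccLimit_ord hbig.le
      have hne0 : (AECUnionAux.nu D').ord ≠ 0 := hlimo.pos.ne'
      have hcardT : #((AECUnionAux.nu D').ord.ToType) = #(↥(ConcStructure.carrier '' D')) := by
        rw [Cardinal.mk_toType, Cardinal.card_ord]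
        rfl
      obtain ⟨et⟩ := Cardinal.eq.mp hcardT
      have pick : ∀ y : ↥(ConcStructure.carrier '' D'),
          ∃ x, x ∈ D' ∧ ConcStructure.carrier x = ↑y := fun y => (Set.mem_image _ _ _).mp y.2
      choose ps hpsD hpsc using pick
      set dT : (AECUnionAux.nu D').ord.ToType → ConcStructure L α := fun t => ps (et t) with hdT
      have hdTD : ∀ t, dT t ∈ D' := fun t => hpsD _
      have hdT_surj : ∀ M ∈ D', ∃ t, dT t = M := by
        intro M hM
        refine ⟨et.symm ⟨M.carrier, Set.mem_image_of_mem _ hM⟩, ?_⟩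
        have h2 : ConcStructure.carrier (dT (et.symm ⟨M.carrier, Set.mem_image_of_mem _ hM⟩)) =
            M.carrier := by
          rw [hdT]
          dsimp only
          rw [et.apply_symm_apply, hpsc]
        exact hinj (hdTD _) hM h2
      obtain ⟨M₀, hM₀⟩ := hD'ne
      set tyin : (AECUnionAux.nu D').ord.ToType → Ordinal.{w} :=
        fun t => @Ordinal.typein (AECUnionAux.nu D').ord.ToType (· < ·) isWellOrder_lt t
        with htyin
      set A : Ordinal.{w} → Set (ConcStructure L α) :=
        fun j => insert M₀ (dT '' {t | tyin t < j}) with hA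
      set E : Ordinal.{w} → Set (ConcStructure L α) := fun j => AECUnionAux.cl uf (A j) with hE
      have hAD : ∀ j, A j ⊆ D' := by
        intro j
        refine Set.insert_subset hM₀ ?_
        rintro x ⟨t, _, rfl⟩
        exact hdTD t
      have hAmono : ∀ {j j' : Ordinal.{w}}, j ≤ j' → A j ⊆ A j' := fun h =>
        Set.insert_subset_insert (Set.image_mono (Set.setOf_subset_setOf.mpr fun t ht => lt_of_lt_of_le ht h))
      have hED : ∀ j, E j ⊆ D' := fun j => AECUnionAux.cl_subset_of_closed (hAD j) hufD
      have hEmono : ∀ {j j' : Ordinal.{w}}, j ≤ j' → E j ⊆ E j' := fun h =>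
        AECUnionAux.cl_mono (hAmono h)
      have hM₀E : ∀ j, M₀ ∈ E j := fun j => AECUnionAux.subset_cl _ (Set.mem_insert _ _)
      have hEdir : ∀ j, ∀ M ∈ E j, ∀ N ∈ E j, ∃ W ∈ E j, C.le M W ∧ C.le N W := by
        intro j M hM N hN
        exact ⟨uf M N, AECUnionAux.cl_closed hM hN,
          (huf M N (hED j hM) (hED j hN)).2.1, (huf M N (hED j hM) (hED j hN)).2.2⟩
      have hEnu : ∀ j, j < (AECUnionAux.nu D').ord → AECUnionAux.nu (E j) < AECUnionAux.nu D' := by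
        intro j hj
        have hjt : j < @Ordinal.type (AECUnionAux.nu D').ord.ToType (· < ·) isWellOrder_lt := by
          rw [Ordinal.type_toType]; exact hj
        have hb : #({t | tyin t < j}) ≤ j.card := by
          have hset : {t | tyin t < j} =
              Set.Iio (@Ordinal.enum (AECUnionAux.nu D').ord.ToType (· < ·) isWellOrder_lt ⟨j, hjt⟩) := by
            ext t
            simp only [Set.mem_setOf_eq, Set.mem_Iio, htyin]
            rw [← @Ordinal.typein_lt_typein (AECUnionAux.nu D').ord.ToType (· < ·) isWellOrder_lt,
              Ordinal.typein_enum]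
          rw [hset]
          have hcard := @Ordinal.card_typein (AECUnionAux.nu D').ord.ToType (· < ·) isWellOrder_lt
            (@Ordinal.enum (AECUnionAux.nu D').ord.ToType (· < ·) isWellOrder_lt ⟨j, hjt⟩)
          rw [Ordinal.typein_enum] at hcard
          exact le_of_eq hcard.symm
        have h1 : AECUnionAux.nu (A j) < AECUnionAux.nu D' := by
          calc AECUnionAux.nu (A j) ≤ AECUnionAux.nu (dT '' {t | tyin t < j}) + 1 :=
                AECUnionAux.nu_insert_le _ _
            _ ≤ #({t | tyin t < j}) + 1 := add_le_add_left (AECUnionAux.nu_image_le dT _) 1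
            _ ≤ j.card + 1 := add_le_add_left hb 1
            _ < AECUnionAux.nu D' := Cardinal.add_lt_of_lt hbig.le (Cardinal.lt_ord.mp hj)
                (lt_trans Cardinal.one_lt_aleph0 hbig)
        calc AECUnionAux.nu (E j) ≤ AECUnionAux.nu (A j) + Cardinal.aleph0.{w} :=
              AECUnionAux.nu_cl_le (hAD j) hinj hufD
          _ < AECUnionAux.nu D' := Cardinal.add_lt_of_lt hbig.le h1 hbig
      have hsucc_mem : ∀ t, dT t ∈ A (tyin t + 1) := by
        intro t
        refine Set.mem_insert_of_mem _ ⟨t, ?_, rfl⟩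
        show tyin t < tyin t + 1
        rw [Ordinal.add_one_eq_succ]
        exact Order.lt_succ _
      have hEcont : ∀ i : Ordinal.{w}, Order.IsSuccLimit i → E i = ⋃ j ∈ Set.Iio i, E j := by
        intro i hilim
        apply subset_antisymm
        · refine AECUnionAux.cl_subset_of_closed ?_ ?_
          · intro x hx
            rcases hx with rfl | ⟨t, ht, rfl⟩
            · exact Set.mem_biUnion hilim.pos (hM₀E 0)
            · have hsucc : tyin t + 1 < i := by
                have h3 := hilim.succ_lt (show tyin t < i from ht)
                rwa [← Ordinal.add_one_eq_succ] at h3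
              exact Set.mem_biUnion hsucc (AECUnionAux.subset_cl _ (hsucc_mem t))
          · intro x hx y hy
            rcases Set.mem_iUnion₂.mp hx with ⟨j1, hj1, hx1⟩
            rcases Set.mem_iUnion₂.mp hy with ⟨j2, hj2, hy2⟩
            exact Set.mem_biUnion (show j1 ⊔ j2 ∈ Set.Iio i from
              max_lt (show j1 < i from hj1) (show j2 < i from hj2))
              (AECUnionAux.cl_closed (hEmono (le_max_left j1 j2) hx1)
                (hEmono (le_max_right j1 j2) hy2))
        · exact Set.iUnion₂_subset fun j hj => hEmono (le_of_lt hj)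
      have hDE : ⋃ j ∈ Set.Iio (AECUnionAux.nu D').ord, E j = D' := by
        apply subset_antisymm
        · exact Set.iUnion₂_subset fun j _ => hED j
        · intro M hM
          obtain ⟨t, rfl⟩ := hdT_surj M hM
          have h1 : tyin t < (AECUnionAux.nu D').ord := Ordinal.typein_lt_self t
          have h2 : tyin t + 1 < (AECUnionAux.nu D').ord := by
            have h3 := hlimo.succ_lt h1
            rwa [← Ordinal.add_one_eq_succ] at h3
          exact Set.mem_biUnion h2 (AECUnionAux.subset_cl _ (hsucc_mem t))
      have hUex : ∀ j : Ordinal.{w}, ∃ U, j < (AECUnionAux.nu D').ord →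
          (IsUnionOf U (E j) ∧ U ∈ C.K ∧ (∀ M ∈ E j, C.le M U) ∧
            ∀ W, (∀ M ∈ E j, C.le M W) → C.le U W) := by
        intro j
        by_cases hj : j < (AECUnionAux.nu D').ord
        · obtain ⟨U, hU⟩ := IH (AECUnionAux.nu (E j)) (lt_of_lt_of_le (hEnu j hj) hc) (E j)
            ((hED j).trans hD'K) ⟨M₀, hM₀E j⟩ (hEdir j) le_rfl
          exact ⟨U, fun _ => hU⟩
        · exact ⟨M₀, fun h => absurd h hj⟩
      choose Uc hUc using hUex
      have hchain : ∀ i j, i ≤ j → j < (AECUnionAux.nu D').ord → C.le (Uc i) (Uc j) := by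
        intro i j hij hj
        have hi := lt_of_le_of_lt hij hj
        exact (hUc i hi).2.2.2 (Uc j) fun M hM => (hUc j hj).2.2.1 M (hEmono hij hM)
      have hccont : ∀ i, i < (AECUnionAux.nu D').ord → Order.IsSuccLimit i →
          IsUnionOf (Uc i) {N | ∃ j < i, N = Uc j} := by
        intro i hi hilim
        constructor
        · rw [(hUc i hi).1.1, hEcont i hilim]
          apply subset_antisymm
          · refine Set.iUnion₂_subset fun M hM => ?_
            rcases Set.mem_iUnion₂.mp hM with ⟨j, hj, hMj⟩
            refine (hcar ((hUc j (hj.trans hi)).2.2.1 M hMj)).trans ?_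
            exact Set.subset_biUnion_of_mem (⟨j, hj, rfl⟩ : Uc j ∈ {N | ∃ j' < i, N = Uc j'})
          · refine Set.iUnion₂_subset ?_
            rintro N ⟨j, hj, rfl⟩
            rw [(hUc j (hj.trans hi)).1.1]
            refine Set.iUnion₂_subset fun M hM => ?_
            exact Set.subset_biUnion_of_mem (Set.mem_biUnion hj hM)
        · rintro N ⟨j, hj, rfl⟩
          exact C.axI (hchain j i hj.le hi)
      obtain ⟨U, hU, hUK, hUle, hUlub⟩ := C.axIII_IV _ Uc hne0 hchain hccont
      have hDle : ∀ M ∈ D', C.le M U := by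
        intro M hM
        have hM' : M ∈ ⋃ j ∈ Set.Iio (AECUnionAux.nu D').ord, E j := hDE.symm ▸ hM
        rcases Set.mem_iUnion₂.mp hM' with ⟨j, hj, hMj⟩
        exact C.axII_trans ((hUc j hj).2.2.1 M hMj) (hUle j hj)
      refine ⟨U, ⟨?_, fun M hM => C.axI (hDle M hM)⟩, hUK, hDle, ?_⟩
      · rw [hU.1]
        apply subset_antisymm
        · refine Set.iUnion₂_subset ?_
          rintro N ⟨j, hj, rfl⟩
          rw [(hUc j hj).1.1]
          exact Set.iUnion₂_subset fun M hM => Set.subset_biUnion_of_mem (hED j hM)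
        · refine Set.iUnion₂_subset fun M hM => ?_
          have hM' : M ∈ ⋃ j ∈ Set.Iio (AECUnionAux.nu D').ord, E j := hDE.symm ▸ hM
          rcases Set.mem_iUnion₂.mp hM' with ⟨j, hj, hMj⟩
          refine (hcar ((hUc j hj).2.2.1 M hMj)).trans ?_
          exact Set.subset_biUnion_of_mem
            (⟨j, hj, rfl⟩ : Uc j ∈ {N | ∃ j' < (AECUnionAux.nu D').ord, N = Uc j'})
      · intro W hW
        exact hUlub W fun j hj => (hUc j hj).2.2.2 W fun M hM => hW M (hED j hM)
  exact main (AECUnionAux.nu D) D hDK hne hdir le_rfl
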